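/- Let A and B be unital prime algebras over a field F, let M be a maximal two-sided ideal of A and N a maximal two-sided ideal of B. Then M ⊗ B + A ⊗ N (the sum of the span of {x ⊗ b : x ∈ M, b ∈ B} and the span of {a ⊗ y : a ∈ A, y ∈ N}) is a maximal two-sided ideal of A ⊗ B if and only if Z(A/M) ⊗ Z(B/N) is a field, where Z(A/M) and Z(B/N) denote the centers of the quotient algebras A/M and B/N. -/

import Mathlib

open TensorProduct
set_option maxHeartbeats 1000000
set_option synthInstance.maxHeartbeats 400000

open TensorProduct

section Coords

variable {F A B : Type*} [Field F] [Ring A] [Algebra F A] [Ring B] [Algebra F B]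
variable {ι : Type*} [DecidableEq ι] (β : Module.Basis ι F B)

/-- Coordinate equivalence for `A ⊗[F] B` relative to a basis of `B`. -/
noncomputable def coordEquiv : A ⊗[F] B ≃ₗ[F] (ι →₀ A) :=
  (TensorProduct.congr (LinearEquiv.refl F A) β.repr).trans
    (TensorProduct.finsuppScalarRight F F A ι)

lemma coordEquiv_tmul (a : A) (b : B) (i : ι) :
    coordEquiv β (a ⊗ₜ[F] b) i = β.repr b i • a := by
  simp [coordEquiv]

lemma coordEquiv_symm_single (i : ι) (a : A) :
    (coordEquiv β).symm (Finsupp.single i a) = a ⊗ₜ[F] β i := by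
  simp only [coordEquiv, LinearEquiv.trans_symm, LinearEquiv.trans_apply,
    TensorProduct.finsuppScalarRight_symm_apply_single, TensorProduct.congr_symm_tmul,
    LinearEquiv.refl_symm, LinearEquiv.refl_apply, Module.Basis.repr_symm_single_one]

lemma coordEquiv_sandwich (x y : A) (t : A ⊗[F] B) (i : ι) :
    coordEquiv β ((x ⊗ₜ[F] (1 : B)) * t * (y ⊗ₜ[F] (1 : B))) i
      = x * coordEquiv β t i * y := by
  induction t using TensorProduct.induction_on with
  | zero => simp
  | tmul a b =>
      rw [Algebra.TensorProduct.tmul_mul_tmul, Algebra.TensorProduct.tmul_mul_tmul,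
        one_mul, mul_one]
      simp only [coordEquiv_tmul]
      rw [mul_smul_comm, smul_mul_assoc]
  | add u v hu hv =>
      simp only [mul_add, add_mul, map_add, Finsupp.add_apply, hu, hv]

lemma coordEquiv_mul_left (x : A) (t : A ⊗[F] B) (i : ι) :
    coordEquiv β ((x ⊗ₜ[F] (1 : B)) * t) i = x * coordEquiv β t i := by
  have := coordEquiv_sandwich β x 1 t i
  rw [← Algebra.TensorProduct.one_def, mul_one, mul_one] at this
  exact this

lemma coordEquiv_mul_right (y : A) (t : A ⊗[F] B) (i : ι) :
    coordEquiv β (t * (y ⊗ₜ[F] (1 : B))) i = coordEquiv β t i * y := by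
  have := coordEquiv_sandwich β 1 y t i
  rw [← Algebra.TensorProduct.one_def, one_mul, one_mul] at this
  exact this

lemma mem_range_of_coords_central (t : A ⊗[F] B)
    (h : ∀ i, coordEquiv β t i ∈ Subalgebra.center F A) :
    t ∈ LinearMap.range (LinearMap.rTensor B (Subalgebra.center F A).val.toLinearMap) := by
  have ht : t = (coordEquiv β t).sum fun i a => a ⊗ₜ[F] β i := by
    conv_lhs => rw [← (coordEquiv β).symm_apply_apply t]
    conv_lhs => rw [← Finsupp.sum_single (coordEquiv β t)]
    rw [map_finsuppSum]
    exact Finsupp.sum_congr fun i _ => coordEquiv_symm_single β i _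
  rw [ht]
  apply Submodule.sum_mem
  intro i hi
  exact ⟨(⟨coordEquiv β t i, h i⟩ : Subalgebra.center F A) ⊗ₜ[F] β i, by
    simp [LinearMap.rTensor_tmul]⟩

end Coords

section Stage
variable {F A B : Type*} [Field F] [Ring A] [Algebra F A] [Ring B] [Algebra F B]
variable {ι : Type*} [DecidableEq ι] (β : Module.Basis ι F B)

set_option maxHeartbeats 1000000 in
lemma stage_aux [Nontrivial A] (hA : ∀ I : TwoSidedIdeal A, I = ⊥ ∨ I = ⊤)
    (I : TwoSidedIdeal (A ⊗[F] B)) :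
    ∀ (n : ℕ) (t0 : A ⊗[F] B), t0 ∈ I → t0 ≠ 0 → (coordEquiv β t0).support.card ≤ n →
      ∃ t, t ∈ I ∧ t ≠ 0 ∧
        t ∈ LinearMap.range
          (LinearMap.rTensor B (Subalgebra.center F A).val.toLinearMap) := by
  intro n
  induction n with
  | zero =>
      intro t0 ht0 hne hcard
      exfalso
      apply hne
      have : coordEquiv β t0 = 0 := by
        rwa [Nat.le_zero, Finset.card_eq_zero, Finsupp.support_eq_empty] at hcard
      simpa using congrArg (coordEquiv β).symm this
  | succ n ih =>
      intro t0 ht0 hne hcard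
      have hfne : coordEquiv β t0 ≠ 0 := by
        intro h
        apply hne
        simpa using congrArg (coordEquiv β).symm h
      set f := coordEquiv β t0 with hf
      obtain ⟨i₀, hi₀⟩ : f.support.Nonempty := Finsupp.support_nonempty_iff.2 hfne
      set G : TwoSidedIdeal A := TwoSidedIdeal.mk'
        { z : A | ∃ u, u ∈ I ∧ coordEquiv β u i₀ = z ∧ (coordEquiv β u).support ⊆ f.support }
        ⟨0, I.zero_mem, by simp, by simp⟩
        (fun {x y} hx hy => by
          obtain ⟨u, hu, hcu, hsu⟩ := hx
          obtain ⟨v, hv, hcv, hsv⟩ := hy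
          refine ⟨u + v, I.add_mem hu hv, by simp [hcu, hcv], ?_⟩
          rw [map_add]
          exact Finsupp.support_add.trans (Finset.union_subset hsu hsv))
        (fun {x} hx => by
          obtain ⟨u, hu, hcu, hsu⟩ := hx
          exact ⟨-u, I.neg_mem hu, by simp [hcu], by simpa using hsu⟩)
        (fun {x y} hy => by
          obtain ⟨u, hu, hcu, hsu⟩ := hy
          refine ⟨(x ⊗ₜ[F] (1 : B)) * u, I.mul_mem_left _ _ hu, by
            rw [coordEquiv_mul_left, hcu], ?_⟩
          intro i hi
          apply hsu
          rw [Finsupp.mem_support_iff] at hi ⊢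
          intro h0
          exact hi (by rw [coordEquiv_mul_left, h0, mul_zero]))
        (fun {x y} hx => by
          obtain ⟨u, hu, hcu, hsu⟩ := hx
          refine ⟨u * (y ⊗ₜ[F] (1 : B)), I.mul_mem_right _ _ hu, by
            rw [coordEquiv_mul_right, hcu], ?_⟩
          intro i hi
          apply hsu
          rw [Finsupp.mem_support_iff] at hi ⊢
          intro h0
          exact hi (by rw [coordEquiv_mul_right, h0, zero_mul]))
      have hGtop : G = ⊤ := by
        rcases hA G with h | h
        · exfalso
          have haG : f i₀ ∈ G := by
            rw [TwoSidedIdeal.mem_mk']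
            exact ⟨t0, ht0, rfl, subset_rfl⟩
          rw [h, TwoSidedIdeal.mem_bot] at haG
          exact (Finsupp.mem_support_iff.1 hi₀) haG
        · exact h
      have h1G : (1 : A) ∈ G := by rw [hGtop]; trivial
      rw [TwoSidedIdeal.mem_mk'] at h1G
      obtain ⟨u, huI, hcu1, hsu⟩ := h1G
      by_cases hcomm : ∀ a : A, (a ⊗ₜ[F] (1 : B)) * u = u * (a ⊗ₜ[F] (1 : B))
      · refine ⟨u, huI, ?_, ?_⟩
        · intro h0
          rw [h0] at hcu1
          simp at hcu1
        · apply mem_range_of_coords_central β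
          intro i
          rw [Subalgebra.mem_center_iff]
          intro a
          have := congrArg (fun t => coordEquiv β t i) (hcomm a)
          simpa [coordEquiv_mul_left, coordEquiv_mul_right] using this
      · push_neg at hcomm
        obtain ⟨a, ha⟩ := hcomm
        set c := (a ⊗ₜ[F] (1 : B)) * u - u * (a ⊗ₜ[F] (1 : B)) with hc
        have hcI : c ∈ I := I.sub_mem (I.mul_mem_left _ _ huI) (I.mul_mem_right _ _ huI)
        have hcne : c ≠ 0 := sub_ne_zero.2 ha
        have hsupp : (coordEquiv β c).support ⊆ f.support.erase i₀ := by
          intro i hi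
          rw [Finsupp.mem_support_iff] at hi
          have hci : coordEquiv β c i = a * coordEquiv β u i - coordEquiv β u i * a := by
            rw [hc, map_sub, Finsupp.sub_apply, coordEquiv_mul_left, coordEquiv_mul_right]
          rw [Finset.mem_erase]
          constructor
          · intro hii
            apply hi
            subst hii
            rw [hci, hcu1, mul_one, one_mul, sub_self]
          · apply hsu
            rw [Finsupp.mem_support_iff]
            intro h0
            exact hi (by rw [hci, h0, mul_zero, zero_mul, sub_self])
        apply ih c hcI hcne
        calc (coordEquiv β c).support.card ≤ (f.support.erase i₀).card :=
              Finset.card_le_card hsupp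
          _ = f.support.card - 1 := Finset.card_erase_of_mem hi₀
          _ ≤ n := by omega

lemma stage [Nontrivial A] (hA : ∀ I : TwoSidedIdeal A, I = ⊥ ∨ I = ⊤)
    (I : TwoSidedIdeal (A ⊗[F] B)) (t0 : A ⊗[F] B) (ht0 : t0 ∈ I) (hne : t0 ≠ 0) :
    ∃ t, t ∈ I ∧ t ≠ 0 ∧
      t ∈ LinearMap.range
        (LinearMap.rTensor B (Subalgebra.center F A).val.toLinearMap) := by
  letI : DecidableEq (Module.Basis.ofVectorSpaceIndex F B) := Classical.decEq _
  exact stage_aux (Module.Basis.ofVectorSpace F B) hA I _ t0 ht0 hne le_rfl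

end Stage

section Transfer

variable (F A B : Type*) [Field F] [Ring A] [Algebra F A] [Ring B] [Algebra F B]

/-- Injectivity of a tensor product of injective linear maps over a field. -/
lemma tmap_injective {M N P Q : Type*} [AddCommGroup M] [AddCommGroup N] [AddCommGroup P]
    [AddCommGroup Q] [Module F M] [Module F N] [Module F P] [Module F Q]
    (f : M →ₗ[F] P) (g : N →ₗ[F] Q) (hf : Function.Injective f) (hg : Function.Injective g) :
    Function.Injective (TensorProduct.map f g) := by
  rw [← LinearMap.lTensor_comp_rTensor, LinearMap.coe_comp]
  exact (Module.Flat.lTensor_preserves_injective_linearMap g hg).comp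
    (Module.Flat.rTensor_preserves_injective_linearMap f hf)

/-- The algebra map `B ⊗ Z(A) → A ⊗ B`. -/
noncomputable def psiMap : B ⊗[F] (Subalgebra.center F A) →ₐ[F] A ⊗[F] B :=
  (Algebra.TensorProduct.map (Subalgebra.center F A).val (AlgHom.id F B)).comp
    (Algebra.TensorProduct.comm F B (Subalgebra.center F A)).toAlgHom

variable {F A B}

lemma psiMap_tmul (b : B) (c : Subalgebra.center F A) :
    psiMap F A B (b ⊗ₜ[F] c) = (c : A) ⊗ₜ[F] b := by
  simp [psiMap]

lemma psiMap_injective : Function.Injective (psiMap F A B) := by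
  have key : (Algebra.TensorProduct.map (Subalgebra.center F A).val (AlgHom.id F B)).toLinearMap =
      TensorProduct.map (Subalgebra.center F A).val.toLinearMap (LinearMap.id (M := B)) :=
    TensorProduct.ext' fun c b => by simp
  have h1 : Function.Injective
      (Algebra.TensorProduct.map (Subalgebra.center F A).val (AlgHom.id F B)) := by
    have h := tmap_injective F (Subalgebra.center F A).val.toLinearMap
      (LinearMap.id (R := F) (M := B)) Subtype.val_injective fun x y h => h
    rw [← key] at h
    exact h
  have h2 : Function.Injective (Algebra.TensorProduct.comm F B (Subalgebra.center F A)) :=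
    (Algebra.TensorProduct.comm F B (Subalgebra.center F A)).injective
  exact h1.comp h2

lemma psiMap_comm_apply (v : (Subalgebra.center F A) ⊗[F] B) :
    psiMap F A B ((Algebra.TensorProduct.comm F (Subalgebra.center F A) B) v) =
      LinearMap.rTensor B (Subalgebra.center F A).val.toLinearMap v := by
  induction v using TensorProduct.induction_on with
  | zero => simp
  | tmul c b => simp [psiMap]
  | add u w hu hw => rw [map_add, map_add, map_add, hu, hw]

/-- The linear inclusion `Z(A) ⊗ Z(B) → A ⊗ B`. -/
noncomputable def zetaLin : (Subalgebra.center F A) ⊗[F] (Subalgebra.center F B) →ₗ[F] A ⊗[F] B :=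
  TensorProduct.map (Subalgebra.center F A).val.toLinearMap
    (Subalgebra.center F B).val.toLinearMap

lemma zetaLin_injective : Function.Injective (zetaLin (F := F) (A := A) (B := B)) :=
  tmap_injective F _ _ Subtype.val_injective Subtype.val_injective

lemma zetaAlg_eq_zetaLin (w : (Subalgebra.center F A) ⊗[F] (Subalgebra.center F B)) :
    Algebra.TensorProduct.map (Subalgebra.center F A).val (Subalgebra.center F B).val w =
      zetaLin w := by
  induction w using TensorProduct.induction_on with
  | zero => simp
  | tmul c d => simp [zetaLin]
  | add u v hu hv => rw [map_add, map_add, hu, hv]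

lemma psiMap_rTensor_apply (w : (Subalgebra.center F B) ⊗[F] (Subalgebra.center F A)) :
    psiMap F A B (LinearMap.rTensor (Subalgebra.center F A)
        (Subalgebra.center F B).val.toLinearMap w) =
      zetaLin ((TensorProduct.comm F (Subalgebra.center F B) (Subalgebra.center F A)) w) := by
  induction w using TensorProduct.induction_on with
  | zero => simp
  | tmul d c => simp [psiMap, zetaLin]
  | add u v hu hv => simp only [map_add, hu, hv]

lemma mem_range_of_commutes (t : A ⊗[F] B)
    (h : ∀ a : A, (a ⊗ₜ[F] (1 : B)) * t = t * (a ⊗ₜ[F] (1 : B))) :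
    t ∈ LinearMap.range
      (LinearMap.rTensor B (Subalgebra.center F A).val.toLinearMap) := by
  letI : DecidableEq (Module.Basis.ofVectorSpaceIndex F B) := Classical.decEq _
  set β := Module.Basis.ofVectorSpace F B
  apply mem_range_of_coords_central β
  intro i
  rw [Subalgebra.mem_center_iff]
  intro a
  have := congrArg (fun s => coordEquiv β s i) (h a)
  simpa [coordEquiv_mul_left, coordEquiv_mul_right] using this

/-- Key lemma: a central element of `A ⊗ B` lies in the image of `Z(A) ⊗ Z(B)`. -/
lemma central_mem_range_zeta (y : A ⊗[F] B) (hy : ∀ w, y * w = w * y) :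
    ∃ z, zetaLin z = y := by
  have h1 : y ∈ LinearMap.range
      (LinearMap.rTensor B (Subalgebra.center F A).val.toLinearMap) :=
    mem_range_of_commutes y fun a => (hy _).symm
  obtain ⟨v, hv⟩ := h1
  set v' := (Algebra.TensorProduct.comm F (Subalgebra.center F A) B) v with hv'
  have hψv' : psiMap F A B v' = y := by rw [hv', psiMap_comm_apply, hv]
  have hcomm : ∀ b : B, (b ⊗ₜ[F] (1 : Subalgebra.center F A)) * v'
      = v' * (b ⊗ₜ[F] (1 : Subalgebra.center F A)) := by
    intro b
    apply psiMap_injective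
    rw [map_mul, map_mul, hψv', psiMap_tmul]
    have h1A : ((1 : Subalgebra.center F A) : A) = 1 := rfl
    rw [h1A]
    exact (hy _).symm
  have h2 := mem_range_of_commutes v' hcomm
  obtain ⟨w, hw⟩ := h2
  exact ⟨_, by rw [← psiMap_rTensor_apply, hw, hψv']⟩

end Transfer

section Main

variable {F A B : Type*} [Field F] [Ring A] [Algebra F A] [Ring B] [Algebra F B]

lemma zetaAlg_central (w : (Subalgebra.center F A) ⊗[F] (Subalgebra.center F B))
    (y : A ⊗[F] B) : zetaLin w * y = y * zetaLin w := by
  induction w using TensorProduct.induction_on with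
  | zero => rw [map_zero, zero_mul, mul_zero]
  | tmul c d =>
      have hc : ∀ g : A, g * (c : A) = (c : A) * g :=
        fun g => Subalgebra.mem_center_iff.1 c.2 g
      have hd : ∀ g : B, g * (d : B) = (d : B) * g :=
        fun g => Subalgebra.mem_center_iff.1 d.2 g
      have hz : zetaLin (c ⊗ₜ[F] d) = (c : A) ⊗ₜ[F] (d : B) := by simp [zetaLin]
      rw [hz]
      induction y using TensorProduct.induction_on with
      | zero => rw [zero_mul, mul_zero]
      | tmul a b =>
          rw [Algebra.TensorProduct.tmul_mul_tmul, Algebra.TensorProduct.tmul_mul_tmul,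
            hc a, hd b]
      | add u v hu hv => rw [mul_add, add_mul, hu, hv]
  | add u v hu hv => rw [map_add, add_mul, mul_add, hu, hv]

lemma exists_zeta_mem [Nontrivial A] [Nontrivial B]
    (hA : ∀ I : TwoSidedIdeal A, I = ⊥ ∨ I = ⊤)
    (hB : ∀ I : TwoSidedIdeal B, I = ⊥ ∨ I = ⊤)
    (I : TwoSidedIdeal (A ⊗[F] B)) (t0 : A ⊗[F] B) (ht0 : t0 ∈ I) (hne : t0 ≠ 0) :
    ∃ w, w ≠ 0 ∧ zetaLin w ∈ I := by
  obtain ⟨t, htI, htne, htU⟩ := stage hA I t0 ht0 hne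
  obtain ⟨v, hv⟩ := htU
  set v' := (Algebra.TensorProduct.comm F (Subalgebra.center F A) B) v with hv'def
  have hψ : psiMap F A B v' = t := by rw [hv'def, psiMap_comm_apply, hv]
  set J := TwoSidedIdeal.comap (psiMap F A B) I with hJ
  have hv'J : v' ∈ J := by
    rw [hJ, TwoSidedIdeal.mem_comap, hψ]; exact htI
  have hv'ne : v' ≠ 0 := fun h => htne (by rw [← hψ, h, map_zero])
  obtain ⟨u, huJ, hune, huU⟩ := stage hB J v' hv'J hv'ne
  obtain ⟨w, hw⟩ := huU
  refine ⟨(TensorProduct.comm F _ _) w, ?_, ?_⟩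
  · intro h0
    apply hune
    have hw0 : w = 0 := by
      have := (TensorProduct.comm F (Subalgebra.center F B)
        (Subalgebra.center F A)).injective (a₁ := w) (a₂ := 0) (by rw [h0, map_zero])
      exact this
    rw [← hw, hw0, map_zero]
  · have hkey := psiMap_rTensor_apply (F := F) (A := A) (B := B) w
    rw [hw] at hkey
    rw [← hkey]
    exact (TwoSidedIdeal.mem_comap _).1 huJ

lemma simple_iff_isField [Nontrivial A] [Nontrivial B]
    (hA : ∀ I : TwoSidedIdeal A, I = ⊥ ∨ I = ⊤)
    (hB : ∀ I : TwoSidedIdeal B, I = ⊥ ∨ I = ⊤) :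
    (Nontrivial (A ⊗[F] B) ∧ ∀ I : TwoSidedIdeal (A ⊗[F] B), I = ⊥ ∨ I = ⊤) ↔
      IsField ((Subalgebra.center F A) ⊗[F] (Subalgebra.center F B)) := by
  constructor
  · rintro ⟨hnt, hids⟩
    refine ⟨⟨0, 1, fun h01 => ?_⟩, mul_comm, ?_⟩
    · have : (0 : A ⊗[F] B) = 1 := by
        have := congrArg (Algebra.TensorProduct.map (Subalgebra.center F A).val
          (Subalgebra.center F B).val) h01
        rwa [map_zero, map_one] at this
      exact zero_ne_one this
    · intro z hz
      set x := zetaLin z with hx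
      have hxne : x ≠ 0 := fun h => hz (zetaLin_injective (by rw [← hx, h, map_zero] : zetaLin z = zetaLin 0))
      have hxc : ∀ y, x * y = y * x := zetaAlg_central z
      set P : TwoSidedIdeal (A ⊗[F] B) := TwoSidedIdeal.mk' {w | ∃ y, w = y * x}
        ⟨0, by rw [zero_mul]⟩
        (fun {w₁ w₂} h1 h2 => by
          obtain ⟨y1, rfl⟩ := h1; obtain ⟨y2, rfl⟩ := h2
          exact ⟨y1 + y2, by rw [add_mul]⟩)
        (fun {w} h => by obtain ⟨y, rfl⟩ := h; exact ⟨-y, by rw [neg_mul]⟩)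
        (fun {r w} h => by obtain ⟨y, rfl⟩ := h; exact ⟨r * y, by rw [mul_assoc]⟩)
        (fun {w r} h => by obtain ⟨y, rfl⟩ := h
                           exact ⟨y * r, by rw [mul_assoc, mul_assoc, hxc r]⟩) with hP
      rcases hids P with h | h
      · exfalso
        have hxP : x ∈ P := by
          rw [hP, TwoSidedIdeal.mem_mk']; exact ⟨1, (one_mul x).symm⟩
        rw [h, TwoSidedIdeal.mem_bot] at hxP
        exact hxne hxP
      · have h1P : (1 : A ⊗[F] B) ∈ P := by rw [h]; trivial
        rw [hP, TwoSidedIdeal.mem_mk'] at h1P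
        obtain ⟨y, hy⟩ := h1P
        have hyx : y * x = 1 := hy.symm
        have hxy : x * y = 1 := by rw [hxc y]; exact hyx
        have hyc : ∀ r, y * r = r * y := by
          intro r
          calc y * r = y * (r * (x * y)) := by rw [hxy, mul_one]
            _ = y * ((r * x) * y) := by rw [← mul_assoc r x y]
            _ = y * ((x * r) * y) := by rw [← hxc r]
            _ = r * y := by rw [← mul_assoc y (x * r) y, ← mul_assoc y x r, hyx, one_mul]
        obtain ⟨w', hw'⟩ := central_mem_range_zeta y fun w => hyc w
        refine ⟨w', ?_⟩
        apply zetaLin_injective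
        rw [← zetaAlg_eq_zetaLin, ← zetaAlg_eq_zetaLin, map_mul, map_one,
          zetaAlg_eq_zetaLin, zetaAlg_eq_zetaLin, ← hx, hw', hxy]
  · intro hZ
    have hnt : Nontrivial (A ⊗[F] B) := by
      rcases hZ.exists_pair_ne with ⟨a, b, hab⟩
      by_contra h
      rw [not_nontrivial_iff_subsingleton] at h
      exact hab (zetaLin_injective (Subsingleton.elim _ _))
    refine ⟨hnt, fun I => ?_⟩
    by_cases hbot : I = ⊥
    · exact Or.inl hbot
    · right
      have hex : ∃ x, x ∈ I ∧ x ≠ 0 := by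
        by_contra h
        push_neg at h
        apply hbot
        rw [eq_bot_iff]
        intro x hx
        rw [TwoSidedIdeal.mem_bot]
        exact h x hx
      obtain ⟨t0, ht0, hne⟩ := hex
      obtain ⟨w, hwne, hwI⟩ := exists_zeta_mem hA hB I t0 ht0 hne
      obtain ⟨w₂, hw₂⟩ := hZ.mul_inv_cancel hwne
      have h1 : zetaLin w * zetaLin w₂ = 1 := by
        rw [← zetaAlg_eq_zetaLin, ← zetaAlg_eq_zetaLin, ← map_mul, hw₂, map_one]
      exact TwoSidedIdeal.eq_top I (h1 ▸ I.mul_mem_right _ _ hwI)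

end Main

section Corr

lemma corr {R S : Type*} [Ring R] [Ring S] (f : R →+* S) (hsurj : Function.Surjective f)
    (K : TwoSidedIdeal R) (hker : ∀ x, f x = 0 ↔ x ∈ K) :
    (K ≠ ⊤ ∧ ∀ J : TwoSidedIdeal R, K < J → J = ⊤) ↔
      (Nontrivial S ∧ ∀ I : TwoSidedIdeal S, I = ⊥ ∨ I = ⊤) := by
  constructor
  · rintro ⟨h1, h2⟩
    constructor
    · by_contra h
      rw [not_nontrivial_iff_subsingleton] at h
      exact h1 (TwoSidedIdeal.eq_top _ ((hker 1).1 (Subsingleton.elim _ _)))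
    · intro I
      have hKle : K ≤ TwoSidedIdeal.comap f I := by
        rw [TwoSidedIdeal.le_iff]
        intro x hx
        rw [SetLike.mem_coe, TwoSidedIdeal.mem_comap]
        have : f x = 0 := (hker x).2 hx
        rw [this]
        exact I.zero_mem
      rcases eq_or_lt_of_le hKle with heq | hlt
      · left
        rw [eq_bot_iff, TwoSidedIdeal.le_iff]
        intro s hs
        rw [SetLike.mem_coe] at hs
        obtain ⟨x, rfl⟩ := hsurj s
        have hxK : x ∈ K := by
          rw [heq, TwoSidedIdeal.mem_comap]
          exact hs
        rw [SetLike.mem_coe, TwoSidedIdeal.mem_bot]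
        exact (hker x).2 hxK
      · right
        apply TwoSidedIdeal.eq_top
        have h1top : (1 : R) ∈ TwoSidedIdeal.comap f I := by rw [h2 _ hlt]; trivial
        have h1' := (TwoSidedIdeal.mem_comap _).1 h1top
        rwa [map_one] at h1'
  · rintro ⟨hnt, hids⟩
    have hKne : K ≠ ⊤ := by
      intro h
      have h0 : f 1 = 0 := (hker 1).2 (by rw [h]; trivial)
      rw [map_one] at h0
      exact one_ne_zero h0
    refine ⟨hKne, fun J hJ => ?_⟩
    set I : TwoSidedIdeal S := TwoSidedIdeal.mk' (f '' (J : Set R))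
      ⟨0, J.zero_mem, map_zero f⟩
      (fun {x y} hx hy => by
        obtain ⟨a, ha, rfl⟩ := hx
        obtain ⟨b, hb, rfl⟩ := hy
        exact ⟨a + b, J.add_mem ha hb, map_add f a b⟩)
      (fun {x} hx => by
        obtain ⟨a, ha, rfl⟩ := hx
        exact ⟨-a, J.neg_mem ha, map_neg f a⟩)
      (fun {x y} hy => by
        obtain ⟨b, hb, rfl⟩ := hy
        obtain ⟨a, rfl⟩ := hsurj x
        exact ⟨a * b, J.mul_mem_left a b hb, map_mul f a b⟩)
      (fun {x y} hx => by
        obtain ⟨a, ha, rfl⟩ := hx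
        obtain ⟨b, rfl⟩ := hsurj y
        exact ⟨a * b, J.mul_mem_right a b ha, map_mul f a b⟩) with hI
    rcases hids I with h | h
    · exfalso
      obtain ⟨x, hxJ, hxK⟩ := Set.exists_of_ssubset ((TwoSidedIdeal.lt_iff K J).1 hJ)
      apply hxK
      have hfx : f x ∈ I := by
        rw [hI]
        refine (TwoSidedIdeal.mem_mk' _ _ _ _ _ _ _).2 ?_
        exact ⟨x, hxJ, rfl⟩
      rw [h, TwoSidedIdeal.mem_bot] at hfx
      exact SetLike.mem_coe.1 ((hker x).1 hfx)
    · have h1I : (1 : S) ∈ I := by rw [h]; trivial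
      rw [hI] at h1I
      replace h1I := (TwoSidedIdeal.mem_mk' _ _ _ _ _ _ _).1 h1I
      obtain ⟨j, hjJ, hj1⟩ := h1I
      apply TwoSidedIdeal.eq_top
      have hj1' : j - 1 ∈ K := (hker _).1 (by rw [map_sub, hj1, map_one, sub_self])
      have hjK : j - 1 ∈ J := (TwoSidedIdeal.le_iff.1 (le_of_lt hJ)) hj1'
      have := J.sub_mem (SetLike.mem_coe.1 hjJ) hjK
      simpa using this

end Corr


/-- Let `A`, `B` be unital prime `F`-algebras, `M` a maximal two-sided ideal of `A` and
`N` a maximal two-sided ideal of `B`, with quotients `A/M`, `B/N` presented abstractly by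
surjective algebra homomorphisms `qM : A → A'`, `qN : B → B'` with kernels `M`, `N`. Then
`M ⊗ B + A ⊗ N` is a maximal two-sided ideal of `A ⊗[F] B` if and only if
`Z(A/M) ⊗[F] Z(B/N)` is a field. -/
theorem maximal_ideal_of_tensor_product_iff_center_tensor_isField
    (F A B A' B' : Type*) [Field F] [Ring A] [Algebra F A] [Ring B] [Algebra F B]
    [Ring A'] [Algebra F A'] [Ring B'] [Algebra F B']
    (hAprime : ∀ a b : A, (∀ x : A, a * x * b = 0) → a = 0 ∨ b = 0)
    (hBprime : ∀ a b : B, (∀ x : B, a * x * b = 0) → a = 0 ∨ b = 0)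
    (M : TwoSidedIdeal A) (hM : M ≠ ⊤)
    (hMmax : ∀ I : TwoSidedIdeal A, M < I → I = ⊤)
    (N : TwoSidedIdeal B) (hN : N ≠ ⊤)
    (hNmax : ∀ I : TwoSidedIdeal B, N < I → I = ⊤)
    (qM : A →ₐ[F] A') (hqMsurj : Function.Surjective qM)
    (hkerM : ∀ x : A, qM x = 0 ↔ x ∈ M)
    (qN : B →ₐ[F] B') (hqNsurj : Function.Surjective qN)
    (hkerN : ∀ y : B, qN y = 0 ↔ y ∈ N) :
    ∃ K : TwoSidedIdeal (A ⊗[F] B),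
      (K : Set (A ⊗[F] B)) =
        ↑(Submodule.span F {t : A ⊗[F] B | ∃ x ∈ M, ∃ b : B, t = x ⊗ₜ[F] b} ⊔
           Submodule.span F {t : A ⊗[F] B | ∃ a : A, ∃ y ∈ N, t = a ⊗ₜ[F] y}) ∧
      ((K ≠ ⊤ ∧ ∀ J : TwoSidedIdeal (A ⊗[F] B), K < J → J = ⊤) ↔
        IsField ((Subalgebra.center F A') ⊗[F] (Subalgebra.center F B'))) := by
  classical
  set φ := Algebra.TensorProduct.map qM qN with hφ
  have hφsurj : Function.Surjective φ := by
    intro z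
    induction z using TensorProduct.induction_on with
    | zero => exact ⟨0, map_zero φ⟩
    | tmul a' b' =>
        obtain ⟨a, rfl⟩ := hqMsurj a'
        obtain ⟨b, rfl⟩ := hqNsurj b'
        exact ⟨a ⊗ₜ[F] b, by rw [hφ, Algebra.TensorProduct.map_tmul]⟩
    | add u v hu hv =>
        obtain ⟨x, rfl⟩ := hu
        obtain ⟨y, rfl⟩ := hv
        exact ⟨x + y, map_add φ x y⟩
  have hφlin : ∀ x, φ x = TensorProduct.map qM.toLinearMap qN.toLinearMap x := by
    intro x
    induction x using TensorProduct.induction_on with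
    | zero => rw [map_zero, map_zero]
    | tmul a b => rw [hφ, Algebra.TensorProduct.map_tmul, TensorProduct.map_tmul]; rfl
    | add u v hu hv => rw [map_add, map_add, hu, hv]
  refine ⟨TwoSidedIdeal.ker φ, ?_, ?_⟩
  · -- carrier equality
    have hker' : LinearMap.ker (TensorProduct.map qM.toLinearMap qN.toLinearMap) =
        LinearMap.range (LinearMap.lTensor A (LinearMap.ker qN.toLinearMap).subtype) ⊔
        LinearMap.range (LinearMap.rTensor B (LinearMap.ker qM.toLinearMap).subtype) :=
      TensorProduct.map_ker (LinearMap.exact_subtype_ker_map qM.toLinearMap) hqMsurj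
        (LinearMap.exact_subtype_ker_map qN.toLinearMap) hqNsurj
    have hr2 : LinearMap.range (LinearMap.lTensor A (LinearMap.ker qN.toLinearMap).subtype) =
        Submodule.span F {t : A ⊗[F] B | ∃ a : A, ∃ y ∈ N, t = a ⊗ₜ[F] y} := by
      rw [LinearMap.lTensor, TensorProduct.range_map_eq_span_tmul]
      congr 1
      ext t
      constructor
      · rintro ⟨a, y, rfl⟩
        exact ⟨a, y.1, (hkerN _).1 (LinearMap.mem_ker.1 y.2), rfl⟩
      · rintro ⟨a, y, hy, rfl⟩
        exact ⟨a, ⟨y, LinearMap.mem_ker.2 ((hkerN y).2 hy)⟩, rfl⟩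
    have hr1 : LinearMap.range (LinearMap.rTensor B (LinearMap.ker qM.toLinearMap).subtype) =
        Submodule.span F {t : A ⊗[F] B | ∃ x ∈ M, ∃ b : B, t = x ⊗ₜ[F] b} := by
      rw [LinearMap.rTensor, TensorProduct.range_map_eq_span_tmul]
      congr 1
      ext t
      constructor
      · rintro ⟨x, b, rfl⟩
        exact ⟨x.1, (hkerM _).1 (LinearMap.mem_ker.1 x.2), b, rfl⟩
      · rintro ⟨x, hx, b, rfl⟩
        exact ⟨⟨x, LinearMap.mem_ker.2 ((hkerM x).2 hx)⟩, b, rfl⟩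
    have hsup : Submodule.span F {t : A ⊗[F] B | ∃ x ∈ M, ∃ b : B, t = x ⊗ₜ[F] b} ⊔
        Submodule.span F {t : A ⊗[F] B | ∃ a : A, ∃ y ∈ N, t = a ⊗ₜ[F] y} =
        LinearMap.ker (TensorProduct.map qM.toLinearMap qN.toLinearMap) := by
      rw [hker', hr1, hr2, sup_comm]
    apply Set.ext
    intro x
    rw [SetLike.mem_coe, TwoSidedIdeal.mem_ker, SetLike.mem_coe, hsup, LinearMap.mem_ker,
      ← hφlin]
  · have hkerM' : ∀ x : A, qM.toRingHom x = 0 ↔ x ∈ M := hkerM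
    have hkerN' : ∀ x : B, qN.toRingHom x = 0 ↔ x ∈ N := hkerN
    have hA' := (corr qM.toRingHom hqMsurj M hkerM').1 ⟨hM, hMmax⟩
    have hB' := (corr qN.toRingHom hqNsurj N hkerN').1 ⟨hN, hNmax⟩
    haveI := hA'.1
    haveI := hB'.1
    have hkerφ : ∀ x, φ.toRingHom x = 0 ↔ x ∈ TwoSidedIdeal.ker φ :=
      fun x => (TwoSidedIdeal.mem_ker φ).symm
    rw [corr φ.toRingHom hφsurj (TwoSidedIdeal.ker φ) hkerφ]
    exact simple_iff_isField hA'.2 hB'.2
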